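/- arXiv:2508.06614 — 4 statements merged into one kernel-verified Lean document; each statement's English description precedes it below -/
import Mathlib

section
/- (Classical Fawzi–Renner inequality.) Let P, Q be probability distributions on a finite set X with supp(P) ⊆ supp(Q), let N be a stochastic channel, and let B_{N,Q} be the Bayes recovery channel of N with reference distribution Q. Setting P̂ = B_{N,Q}(N(P)), one has D_KL(P ‖ Q) − D_KL(N(P) ‖ N(Q)) ≥ D_KL(P ‖ P̂). -/
open Finset

/-- Classical Fawzi–Renner inequality:
`D_KL(P ‖ Q) − D_KL(N(P) ‖ N(Q)) ≥ D_KL(P ‖ P̂)` where `P̂ = B_{N,Q}(N(P))`. -/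
theorem classical_fawzi_renner {X : Type*} [Fintype X]
    (P Q : X → ℝ)
    (hPnn : ∀ x, 0 ≤ P x) (hPsum : ∑ x, P x = 1)
    (hQnn : ∀ x, 0 ≤ Q x) (hQsum : ∑ x, Q x = 1)
    (hsupp : ∀ x, 0 < P x → 0 < Q x)
    (N : X → X → ℝ) (hNnn : ∀ y x, 0 ≤ N y x) (hNrow : ∀ x, ∑ y, N y x = 1)
    (NP NQ : X → ℝ)
    (hNP : ∀ y, NP y = ∑ x, N y x * P x)
    (hNQ : ∀ y, NQ y = ∑ x, N y x * Q x)
    (B : X → X → ℝ)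
    (hB : ∀ x y, B x y = if 0 < NQ y then N y x * Q x / NQ y else 0)
    (Phat : X → ℝ)
    (hPhat : ∀ x, Phat x = ∑ y, B x y * NP y) :
    (∑ x, P x * Real.log (P x / Phat x)) ≤
      (∑ x, P x * Real.log (P x / Q x)) - ∑ y, NP y * Real.log (NP y / NQ y) := by
  have hNQnn : ∀ y, 0 ≤ NQ y := fun y => by
    rw [hNQ]; exact Finset.sum_nonneg fun z _ => mul_nonneg (hNnn y z) (hQnn z)
  have hNPnn : ∀ y, 0 ≤ NP y := fun y => by
    rw [hNP]; exact Finset.sum_nonneg fun z _ => mul_nonneg (hNnn y z) (hPnn z)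
  have hNQge : ∀ x y, N y x * Q x ≤ NQ y := fun x y => by
    rw [hNQ]
    exact Finset.single_le_sum (fun z _ => mul_nonneg (hNnn y z) (hQnn z)) (Finset.mem_univ x)
  have hNPge : ∀ x y, N y x * P x ≤ NP y := fun x y => by
    rw [hNP]
    exact Finset.single_le_sum (fun z _ => mul_nonneg (hNnn y z) (hPnn z)) (Finset.mem_univ x)
  -- key per-x facts
  have hx : ∀ x, 0 < P x → 0 < Phat x ∧
      ∑ y, N y x * Real.log (NP y / NQ y) ≤ Real.log (Phat x / Q x) := by
    intro x hPx
    have hQx := hsupp x hPx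
    set S := ∑ y, N y x * (NP y / NQ y) with hS
    have hPhat_eq : Phat x = Q x * S := by
      rw [hPhat, hS, Finset.mul_sum]
      refine Finset.sum_congr rfl fun y _ => ?_
      rw [hB]
      by_cases h : 0 < NQ y
      · rw [if_pos h]
        field_simp
      · rw [if_neg h]
        have h0 : NQ y = 0 := le_antisymm (not_lt.mp h) (hNQnn y)
        simp [h0]
    have hSpos : 0 < S := by
      have hex : ∃ y, 0 < N y x := by
        by_contra hc; push_neg at hc
        have h0 : ∑ y, N y x = 0 :=
          Finset.sum_eq_zero fun y _ => le_antisymm (hc y) (hNnn y x)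
        rw [hNrow x] at h0; norm_num at h0
      obtain ⟨y0, hy0⟩ := hex
      refine Finset.sum_pos'
        (fun y _ => mul_nonneg (hNnn y x) (div_nonneg (hNPnn y) (hNQnn y)))
        ⟨y0, Finset.mem_univ y0, ?_⟩
      have hNQ0 : 0 < NQ y0 := lt_of_lt_of_le (mul_pos hy0 hQx) (hNQge x y0)
      have hNP0 : 0 < NP y0 := lt_of_lt_of_le (mul_pos hy0 hPx) (hNPge x y0)
      exact mul_pos hy0 (div_pos hNP0 hNQ0)
    have hPhatpos : 0 < Phat x := hPhat_eq ▸ mul_pos hQx hSpos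
    refine ⟨hPhatpos, ?_⟩
    have hlogS : Real.log (Phat x / Q x) = Real.log S := by
      rw [hPhat_eq, mul_comm, mul_div_assoc, div_self hQx.ne', mul_one]
    rw [hlogS]
    calc ∑ y, N y x * Real.log (NP y / NQ y)
        ≤ ∑ y, N y x * ((NP y / NQ y) / S - 1 + Real.log S) := by
          refine Finset.sum_le_sum fun y _ => ?_
          rcases eq_or_lt_of_le (hNnn y x) with hw | hw
          · simp [← hw]
          · have hNQy : 0 < NQ y := lt_of_lt_of_le (mul_pos hw hQx) (hNQge x y)
            have hNPy : 0 < NP y := lt_of_lt_of_le (mul_pos hw hPx) (hNPge x y)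
            have ha : 0 < NP y / NQ y := div_pos hNPy hNQy
            refine mul_le_mul_of_nonneg_left ?_ hw.le
            have h1 : Real.log ((NP y / NQ y) / S) ≤ (NP y / NQ y) / S - 1 :=
              Real.log_le_sub_one_of_pos (div_pos ha hSpos)
            rw [Real.log_div ha.ne' hSpos.ne'] at h1
            linarith
      _ = Real.log S := by
          have h1 : ∑ y, N y x * ((NP y / NQ y) / S - 1 + Real.log S)
              = (∑ y, N y x * (NP y / NQ y)) / S - (∑ y, N y x)
                + (∑ y, N y x) * Real.log S := by
            rw [Finset.sum_div, ← Finset.sum_sub_distrib, Finset.sum_mul,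
              ← Finset.sum_add_distrib]
            refine Finset.sum_congr rfl fun y _ => ?_
            rw [mul_div_assoc]
            ring
          rw [h1, hNrow, ← hS, div_self hSpos.ne']
          ring
  -- data processing step rearranged
  have hmain : ∑ y, NP y * Real.log (NP y / NQ y)
      ≤ ∑ x, P x * Real.log (Phat x / Q x) := by
    have hswap : ∑ y, NP y * Real.log (NP y / NQ y)
        = ∑ x, P x * ∑ y, N y x * Real.log (NP y / NQ y) := by
      simp_rw [hNP, Finset.sum_mul, Finset.mul_sum]
      rw [Finset.sum_comm]
      exact Finset.sum_congr rfl fun x _ => Finset.sum_congr rfl fun y _ => by ring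
    rw [hswap]
    refine Finset.sum_le_sum fun x _ => ?_
    rcases eq_or_lt_of_le (hPnn x) with h0 | hPx
    · simp [← h0]
    · exact mul_le_mul_of_nonneg_left (hx x hPx).2 (hPnn x)
  -- chain rule for logs, termwise
  have hfin : ∀ x, P x * Real.log (P x / Phat x) + P x * Real.log (Phat x / Q x)
      = P x * Real.log (P x / Q x) := by
    intro x
    rcases eq_or_lt_of_le (hPnn x) with h0 | hPx
    · simp [← h0]
    · have hQx := hsupp x hPx
      have hPhatx := (hx x hPx).1
      rw [← mul_add, Real.log_div hPx.ne' hPhatx.ne', Real.log_div hPhatx.ne' hQx.ne',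
        Real.log_div hPx.ne' hQx.ne']
      ring
  have hsum : ∑ x, P x * Real.log (P x / Phat x) + ∑ x, P x * Real.log (Phat x / Q x)
      = ∑ x, P x * Real.log (P x / Q x) := by
    rw [← Finset.sum_add_distrib]
    exact Finset.sum_congr rfl fun x _ => hfin x
  linarith
end

section
/- (Local recovery error bounded by conditional mutual information.) Let P be a probability distribution on a finite tripartite space X_A × X_B × X_C, let N be a stochastic channel acting only on coordinate A, and let B be the local Bayes recovery channel built from the AB-marginal, B((x_A,x_B)|(y_A,x_B)) = N_A(y_A|x_A)P_AB(x_A,x_B)/∑_{x'_A} N_A(y_A|x'_A)P_AB(x'_A,x_B), acting as identity on C. Then with P̂ = (B ∘ N)(P), one has D_KL(P ‖ P̂) ≤ I(X_A : X_C | X_B)_P. -/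
open Finset

private lemma nlog (n t : ℝ) (hn : 0 ≤ n) (ht : 0 ≤ t) (hpt : 0 < n → 0 < t) :
    n * Real.log (t / n) ≤ t - n := by
  rcases hn.eq_or_lt with h | h
  · simp [← h, ht]
  · have ht' := hpt h
    have h1 : Real.log (t / n) ≤ t / n - 1 :=
      Real.log_le_sub_one_of_pos (div_pos ht' h)
    have := mul_le_mul_of_nonneg_left h1 h.le
    calc n * Real.log (t / n) ≤ n * (t / n - 1) := this
      _ = t - n := by field_simp

private lemma sum_comm3 {α β γ : Type*} [Fintype α] [Fintype β] [Fintype γ] (f : α → β → γ → ℝ) :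
    (∑ a, ∑ b, ∑ c, f a b c) = ∑ b, ∑ c, ∑ a, f a b c := by
  rw [Finset.sum_comm]
  exact Finset.sum_congr rfl fun b _ => Finset.sum_comm

private lemma swap4 {α β γ δ : Type*} [Fintype α] [Fintype β] [Fintype γ] [Fintype δ]
    (f : α → β → γ → δ → ℝ) :
    (∑ a, ∑ b, ∑ c, ∑ y, f a b c y) = ∑ y, ∑ b, ∑ c, ∑ a, f a b c y := by
  calc (∑ a, ∑ b, ∑ c, ∑ y, f a b c y)
      = ∑ b, ∑ c, ∑ a, ∑ y, f a b c y := sum_comm3 _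
    _ = ∑ b, ∑ c, ∑ y, ∑ a, f a b c y :=
        Finset.sum_congr rfl fun b _ => Finset.sum_congr rfl fun c _ => Finset.sum_comm
    _ = ∑ y, ∑ b, ∑ c, ∑ a, f a b c y := (sum_comm3 fun y b c => ∑ a, f a b c y).symm


/-- Local recovery error is bounded by conditional mutual information:
`D_KL(P ‖ P̂) ≤ I(X_A : X_C | X_B)_P`, where `P̂` is obtained by applying the local
Bayes recovery channel (built from the `AB`-marginal) after the forward channel. -/
theorem local_recovery_le_cmi {XA XB XC : Type*}
    [Fintype XA] [Fintype XB] [Fintype XC]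
    (P : XA → XB → XC → ℝ)
    (hPpos : ∀ a b c, 0 < P a b c) (hPsum : ∑ a, ∑ b, ∑ c, P a b c = 1)
    (NA : XA → XA → ℝ) (hNnn : ∀ y x, 0 ≤ NA y x) (hNrow : ∀ x, ∑ y, NA y x = 1)
    (PAB : XA → XB → ℝ) (hPAB : ∀ a b, PAB a b = ∑ c, P a b c)
    (PBC : XB → XC → ℝ) (hPBC : ∀ b c, PBC b c = ∑ a, P a b c)
    (PB : XB → ℝ) (hPB : ∀ b, PB b = ∑ a, ∑ c, P a b c)
    -- forward evolution `N(P)`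
    (NP : XA → XB → XC → ℝ)
    (hNP : ∀ y b c, NP y b c = ∑ a, NA y a * P a b c)
    -- locally recovered distribution `P̂ = B_{N, P_AB}(N(P))`
    (Phat : XA → XB → XC → ℝ)
    (hPhat : ∀ a b c, Phat a b c =
      ∑ y, (NA y a * PAB a b / ∑ a', NA y a' * PAB a' b) * NP y b c)
    -- Shannon entropies
    (H3 HAB HBC HB : ℝ)
    (hH3 : H3 = -∑ a, ∑ b, ∑ c, P a b c * Real.log (P a b c))
    (hHAB : HAB = -∑ a, ∑ b, PAB a b * Real.log (PAB a b))
    (hHBC : HBC = -∑ b, ∑ c, PBC b c * Real.log (PBC b c))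
    (hHB : HB = -∑ b, PB b * Real.log (PB b)) :
    (∑ a, ∑ b, ∑ c, P a b c * Real.log (P a b c / Phat a b c))
      ≤ HAB + HBC - H3 - HB := by
  classical
  -- nonemptiness
  have hXC : Nonempty XC := by
    by_contra h
    rw [not_nonempty_iff] at h
    simp at hPsum
  have hXA : Nonempty XA := by
    by_contra h
    rw [not_nonempty_iff] at h
    simp at hPsum
  have univ_ne_A : (univ : Finset XA).Nonempty := univ_nonempty
  have univ_ne_C : (univ : Finset XC).Nonempty := univ_nonempty
  -- positivity of marginals
  have hPABpos : ∀ a b, 0 < PAB a b := fun a b => by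
    rw [hPAB]; exact Finset.sum_pos (fun c _ => hPpos a b c) univ_ne_C
  have hPBCpos : ∀ b c, 0 < PBC b c := fun b c => by
    rw [hPBC]; exact Finset.sum_pos (fun a _ => hPpos a b c) univ_ne_A
  have hPBpos : ∀ b, 0 < PB b := fun b => by
    rw [hPB]
    exact Finset.sum_pos (fun a _ => Finset.sum_pos (fun c _ => hPpos a b c) univ_ne_C) univ_ne_A
  -- the mixing weight m
  set m : XA → XB → ℝ := fun y b => ∑ a', NA y a' * PAB a' b with hm
  have hPhat' : ∀ a b c, Phat a b c = ∑ y, (NA y a * PAB a b / m y b) * NP y b c := hPhat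
  have hmnn : ∀ y b, 0 ≤ m y b := fun y b =>
    Finset.sum_nonneg fun a _ => mul_nonneg (hNnn y a) (hPABpos a b).le
  have hmge : ∀ y a b, NA y a * PAB a b ≤ m y b := fun y a b =>
    Finset.single_le_sum (fun a' _ => mul_nonneg (hNnn y a') (hPABpos a' b).le) (mem_univ a)
  have hNPnn : ∀ y b c, 0 ≤ NP y b c := fun y b c => by
    rw [hNP]; exact Finset.sum_nonneg fun a _ => mul_nonneg (hNnn y a) (hPpos a b c).le
  have hNPge : ∀ y a b c, NA y a * P a b c ≤ NP y b c := fun y a b c => by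
    rw [hNP]
    exact Finset.single_le_sum (fun a' _ => mul_nonneg (hNnn y a') (hPpos a' b c).le) (mem_univ a)
  have hmpos : ∀ y a b, 0 < NA y a → 0 < m y b := fun y a b h =>
    lt_of_lt_of_le (mul_pos h (hPABpos a b)) (hmge y a b)
  have hNPpos : ∀ y a b c, 0 < NA y a → 0 < NP y b c := fun y a b c h =>
    lt_of_lt_of_le (mul_pos h (hPpos a b c)) (hNPge y a b c)
  have hex : ∀ a, ∃ y, 0 < NA y a := by
    intro a
    by_contra h
    push_neg at h
    have h0 : ∑ y, NA y a = 0 :=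
      Finset.sum_eq_zero fun y _ => le_antisymm (h y) (hNnn y a)
    rw [hNrow a] at h0
    norm_num at h0
  have hq_nn : ∀ y a b c, 0 ≤ (NA y a * PAB a b / m y b) * NP y b c := fun y a b c =>
    mul_nonneg (div_nonneg (mul_nonneg (hNnn y a) (hPABpos a b).le) (hmnn y b)) (hNPnn y b c)
  have hq_pos : ∀ y a b c, 0 < NA y a → 0 < (NA y a * PAB a b / m y b) * NP y b c := by
    intro y a b c hNA
    exact mul_pos (div_pos (mul_pos hNA (hPABpos a b)) (hmpos y a b hNA)) (hNPpos y a b c hNA)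
  have hPhatpos : ∀ a b c, 0 < Phat a b c := by
    intro a b c
    obtain ⟨y0, hy0⟩ := hex a
    rw [hPhat' a b c]
    exact Finset.sum_pos' (fun y _ => hq_nn y a b c) ⟨y0, mem_univ y0, hq_pos y0 a b c hy0⟩
  -- additional marginal identities
  have hPBsum : ∀ b, ∑ c, PBC b c = PB b := by
    intro b
    rw [hPB]
    calc ∑ c, PBC b c = ∑ c, ∑ a, P a b c := by simp [hPBC]
      _ = ∑ a, ∑ c, P a b c := Finset.sum_comm
  have hPB' : ∀ b, PB b = ∑ a, PAB a b := by
    intro b; rw [hPB]; exact Finset.sum_congr rfl fun a _ => (hPAB a b).symm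
  have hNPsum : ∀ b c, ∑ y, NP y b c = PBC b c := by
    intro b c
    calc ∑ y, NP y b c = ∑ y, ∑ a, NA y a * P a b c := by simp [hNP]
      _ = ∑ a, ∑ y, NA y a * P a b c := Finset.sum_comm
      _ = ∑ a, (∑ y, NA y a) * P a b c := by
          exact Finset.sum_congr rfl fun a _ => (Finset.sum_mul _ _ _).symm
      _ = ∑ a, P a b c := by simp [hNrow]
      _ = PBC b c := (hPBC b c).symm
  have hmsum : ∀ b, ∑ y, m y b = PB b := by
    intro b
    calc ∑ y, m y b = ∑ a, ∑ y, NA y a * PAB a b := Finset.sum_comm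
      _ = ∑ a, (∑ y, NA y a) * PAB a b := by
          exact Finset.sum_congr rfl fun a _ => (Finset.sum_mul _ _ _).symm
      _ = ∑ a, PAB a b := by simp [hNrow]
      _ = PB b := (hPB' b).symm
  -- row sums of the lifted distribution
  have hsump : ∀ a b c, ∑ y, NA y a * P a b c = P a b c := by
    intro a b c
    rw [← Finset.sum_mul, hNrow, one_mul]
  -- Claim A : pointwise log-sum inequality
  have claimA : ∀ a b c, P a b c * Real.log (P a b c / Phat a b c) ≤
      ∑ y, (NA y a * P a b c) *
        Real.log ((NA y a * P a b c) / ((NA y a * PAB a b / m y b) * NP y b c)) := by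
    intro a b c
    have hCpos : 0 < P a b c / Phat a b c := div_pos (hPpos a b c) (hPhatpos a b c)
    have key : ∀ y, (NA y a * P a b c) * Real.log (P a b c / Phat a b c)
        - (NA y a * P a b c) *
          Real.log ((NA y a * P a b c) / ((NA y a * PAB a b / m y b) * NP y b c))
        ≤ (P a b c / Phat a b c) * ((NA y a * PAB a b / m y b) * NP y b c)
          - NA y a * P a b c := by
      intro y
      rcases (hNnn y a).eq_or_lt with hNA | hNA
      · rw [← hNA]
        simp
      · have hp : 0 < NA y a * P a b c := mul_pos hNA (hPpos a b c)
        have hq : 0 < (NA y a * PAB a b / m y b) * NP y b c := hq_pos y a b c hNA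
        have e : Real.log (P a b c / Phat a b c)
            - Real.log ((NA y a * P a b c) / ((NA y a * PAB a b / m y b) * NP y b c))
            = Real.log (((P a b c / Phat a b c) * ((NA y a * PAB a b / m y b) * NP y b c))
                / (NA y a * P a b c)) := by
          rw [Real.log_div hp.ne' hq.ne',
            Real.log_div (mul_pos hCpos hq).ne' hp.ne',
            Real.log_mul hCpos.ne' hq.ne']
          ring
        have hnl := nlog (NA y a * P a b c)
          ((P a b c / Phat a b c) * ((NA y a * PAB a b / m y b) * NP y b c))
          hp.le (mul_nonneg hCpos.le hq.le) (fun _ => mul_pos hCpos hq)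
        calc (NA y a * P a b c) * Real.log (P a b c / Phat a b c)
              - (NA y a * P a b c) *
                Real.log ((NA y a * P a b c) / ((NA y a * PAB a b / m y b) * NP y b c))
            = (NA y a * P a b c) *
              Real.log ((((P a b c / Phat a b c) * ((NA y a * PAB a b / m y b) * NP y b c)))
                / (NA y a * P a b c)) := by rw [← mul_sub, e]
          _ ≤ _ := hnl
    have hsum := Finset.sum_le_sum (fun y (_ : y ∈ univ) => key y)
    rw [Finset.sum_sub_distrib, Finset.sum_sub_distrib, ← Finset.sum_mul, hsump,
      ← Finset.mul_sum, ← hPhat' a b c, div_mul_cancel₀ _ (hPhatpos a b c).ne'] at hsum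
    linarith
  -- termwise decomposition of the intermediate divergence
  have hterm : ∀ a b c y, (NA y a * P a b c) *
      Real.log ((NA y a * P a b c) / ((NA y a * PAB a b / m y b) * NP y b c))
      = (NA y a * P a b c) * Real.log (P a b c / PAB a b)
        + (NA y a * P a b c) * Real.log (m y b / NP y b c) := by
    intro a b c y
    rcases (hNnn y a).eq_or_lt with hNA | hNA
    · rw [← hNA]; ring
    · have hmp := hmpos y a b hNA
      have hNPp := hNPpos y a b c hNA
      have h1 : NA y a ≠ 0 := hNA.ne'
      have h2 : PAB a b ≠ 0 := (hPABpos a b).ne'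
      have h3 : m y b ≠ 0 := hmp.ne'
      have h4 : NP y b c ≠ 0 := hNPp.ne'
      have hratio : (NA y a * P a b c) / ((NA y a * PAB a b / m y b) * NP y b c)
          = (P a b c / PAB a b) * (m y b / NP y b c) := by
        field_simp
      rw [hratio, Real.log_mul (div_pos (hPpos a b c) (hPABpos a b)).ne'
        (div_pos hmp hNPp).ne']
      ring
  -- the intermediate divergence splits as T1 + T2
  have hS : (∑ a, ∑ b, ∑ c, ∑ y, (NA y a * P a b c) *
        Real.log ((NA y a * P a b c) / ((NA y a * PAB a b / m y b) * NP y b c)))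
      = (∑ a, ∑ b, ∑ c, P a b c * Real.log (P a b c / PAB a b))
        + ∑ y, ∑ b, ∑ c, NP y b c * Real.log (m y b / NP y b c) := by
    have e1 : ∀ a b c, (∑ y, (NA y a * P a b c) *
        Real.log ((NA y a * P a b c) / ((NA y a * PAB a b / m y b) * NP y b c)))
        = P a b c * Real.log (P a b c / PAB a b)
          + ∑ y, (NA y a * P a b c) * Real.log (m y b / NP y b c) := by
      intro a b c
      calc (∑ y, (NA y a * P a b c) *
            Real.log ((NA y a * P a b c) / ((NA y a * PAB a b / m y b) * NP y b c)))
          = ∑ y, ((NA y a * P a b c) * Real.log (P a b c / PAB a b)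
              + (NA y a * P a b c) * Real.log (m y b / NP y b c)) :=
            Finset.sum_congr rfl fun y _ => hterm a b c y
        _ = (∑ y, NA y a * P a b c) * Real.log (P a b c / PAB a b)
              + ∑ y, (NA y a * P a b c) * Real.log (m y b / NP y b c) := by
            rw [Finset.sum_add_distrib, Finset.sum_mul]
        _ = P a b c * Real.log (P a b c / PAB a b)
              + ∑ y, (NA y a * P a b c) * Real.log (m y b / NP y b c) := by
            rw [hsump]
    simp only [e1, Finset.sum_add_distrib]
    congr 1
    rw [swap4 (fun a b c y => (NA y a * P a b c) * Real.log (m y b / NP y b c))]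
    refine Finset.sum_congr rfl fun y _ => Finset.sum_congr rfl fun b _ =>
      Finset.sum_congr rfl fun c _ => ?_
    rw [← Finset.sum_mul, ← hNP]
  -- Step 3 : T2 ≤ T3
  have hterm2 : ∀ y b c, NP y b c * Real.log (m y b / NP y b c)
      - NP y b c * Real.log (PB b / PBC b c)
      ≤ m y b * PBC b c / PB b - NP y b c := by
    intro y b c
    have htnn : 0 ≤ m y b * PBC b c / PB b :=
      div_nonneg (mul_nonneg (hmnn y b) (hPBCpos b c).le) (hPBpos b).le
    rcases (hNPnn y b c).eq_or_lt with h | h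
    · rw [← h]; simpa using htnn
    · have hexy : ∃ a, 0 < NA y a := by
        by_contra hno
        push_neg at hno
        have h0 : NP y b c = 0 := by
          rw [hNP]
          exact Finset.sum_eq_zero fun a _ => by
            rw [le_antisymm (hno a) (hNnn y a)]; ring
        rw [h0] at h; exact lt_irrefl _ h
      obtain ⟨a0, ha0⟩ := hexy
      have hmp : 0 < m y b := hmpos y a0 b ha0
      have htp : 0 < m y b * PBC b c / PB b :=
        div_pos (mul_pos hmp (hPBCpos b c)) (hPBpos b)
      have e : Real.log (m y b / NP y b c) - Real.log (PB b / PBC b c)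
          = Real.log ((m y b * PBC b c / PB b) / NP y b c) := by
        rw [Real.log_div hmp.ne' h.ne', Real.log_div (hPBpos b).ne' (hPBCpos b c).ne',
          Real.log_div htp.ne' h.ne',
          Real.log_div (mul_pos hmp (hPBCpos b c)).ne' (hPBpos b).ne',
          Real.log_mul hmp.ne' (hPBCpos b c).ne']
        ring
      calc NP y b c * Real.log (m y b / NP y b c) - NP y b c * Real.log (PB b / PBC b c)
          = NP y b c * Real.log ((m y b * PBC b c / PB b) / NP y b c) := by
            rw [← mul_sub, e]
        _ ≤ m y b * PBC b c / PB b - NP y b c := nlog _ _ h.le htnn (fun _ => htp)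
  have step3 : (∑ y, ∑ b, ∑ c, NP y b c * Real.log (m y b / NP y b c))
      ≤ ∑ b, ∑ c, PBC b c * Real.log (PB b / PBC b c) := by
    have big := Finset.sum_le_sum fun y (_ : y ∈ univ) =>
      Finset.sum_le_sum fun b (_ : b ∈ univ) =>
        Finset.sum_le_sum fun c (_ : c ∈ univ) => hterm2 y b c
    have eL : (∑ y, ∑ b, ∑ c, (NP y b c * Real.log (m y b / NP y b c)
          - NP y b c * Real.log (PB b / PBC b c)))
        = (∑ y, ∑ b, ∑ c, NP y b c * Real.log (m y b / NP y b c))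
          - ∑ b, ∑ c, PBC b c * Real.log (PB b / PBC b c) := by
      simp only [Finset.sum_sub_distrib]
      congr 1
      rw [sum_comm3 (fun y b c => NP y b c * Real.log (PB b / PBC b c))]
      refine Finset.sum_congr rfl fun b _ => Finset.sum_congr rfl fun c _ => ?_
      rw [← Finset.sum_mul, hNPsum]
    have eR : (∑ y, ∑ b, ∑ c, (m y b * PBC b c / PB b - NP y b c)) = 0 := by
      simp only [Finset.sum_sub_distrib]
      have e1 : (∑ y, ∑ b, ∑ c, m y b * PBC b c / PB b) = ∑ b, ∑ c, PBC b c := by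
        rw [sum_comm3 (fun y b c => m y b * PBC b c / PB b)]
        refine Finset.sum_congr rfl fun b _ => Finset.sum_congr rfl fun c _ => ?_
        rw [← Finset.sum_div, ← Finset.sum_mul, hmsum,
          mul_div_cancel_left₀ _ (hPBpos b).ne']
      have e2 : (∑ y, ∑ b, ∑ c, NP y b c) = ∑ b, ∑ c, PBC b c := by
        rw [sum_comm3 (fun y b c => NP y b c)]
        exact Finset.sum_congr rfl fun b _ => Finset.sum_congr rfl fun c _ => hNPsum b c
      rw [e1, e2, sub_self]
    rw [eL, eR] at big
    linarith
  -- identities for the right-hand side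
  have eT1 : (∑ a, ∑ b, ∑ c, P a b c * Real.log (P a b c / PAB a b))
      = (∑ a, ∑ b, ∑ c, P a b c * Real.log (P a b c))
        - ∑ a, ∑ b, PAB a b * Real.log (PAB a b) := by
    have h : ∀ a b c, P a b c * Real.log (P a b c / PAB a b)
        = P a b c * Real.log (P a b c) - P a b c * Real.log (PAB a b) := fun a b c => by
      rw [Real.log_div (hPpos a b c).ne' (hPABpos a b).ne']; ring
    simp only [h, Finset.sum_sub_distrib]
    congr 1
    refine Finset.sum_congr rfl fun a _ => Finset.sum_congr rfl fun b _ => ?_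
    rw [← Finset.sum_mul, ← hPAB]
  have eT3 : (∑ b, ∑ c, PBC b c * Real.log (PB b / PBC b c))
      = (∑ b, PB b * Real.log (PB b)) - ∑ b, ∑ c, PBC b c * Real.log (PBC b c) := by
    have h : ∀ b c, PBC b c * Real.log (PB b / PBC b c)
        = PBC b c * Real.log (PB b) - PBC b c * Real.log (PBC b c) := fun b c => by
      rw [Real.log_div (hPBpos b).ne' (hPBCpos b c).ne']; ring
    simp only [h, Finset.sum_sub_distrib]
    congr 1
    refine Finset.sum_congr rfl fun b _ => ?_
    rw [← Finset.sum_mul, hPBsum]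
  -- final assembly
  have stepA : (∑ a, ∑ b, ∑ c, P a b c * Real.log (P a b c / Phat a b c))
      ≤ ∑ a, ∑ b, ∑ c, ∑ y, (NA y a * P a b c) *
          Real.log ((NA y a * P a b c) / ((NA y a * PAB a b / m y b) * NP y b c)) :=
    Finset.sum_le_sum fun a _ => Finset.sum_le_sum fun b _ =>
      Finset.sum_le_sum fun c _ => claimA a b c
  rw [hS] at stepA
  rw [hH3, hHAB, hHBC, hHB]
  have := eT1
  have := eT3
  linarith [stepA, step3]
end

section
/- (Combined Pinsker + CMI bound.) Under the hypotheses of the local Bayes recovery setup, the total variation distance between the original distribution P and the locally recovered distribution P̂ satisfies 2·TV(P, P̂)² ≤ D_KL(P ‖ P̂) ≤ I(X_A : X_C | X_B)_P. -/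
open Finset

private lemma phi_deriv {t : ℝ} (ht : 0 < t) :
    HasDerivAt (fun s : ℝ => Real.log s - 2*(s-1)/(s+1)) (1/t - 4/(t+1)^2) t := by
  have h1 : HasDerivAt Real.log (1/t) t := by
    simpa [one_div] using Real.hasDerivAt_log (ne_of_gt ht)
  have hne : t + 1 ≠ 0 := by linarith
  have hnum : HasDerivAt (fun s : ℝ => 2*(s-1)) 2 t := by
    simpa using ((hasDerivAt_id t).sub_const (1:ℝ)).const_mul (2:ℝ)
  have hden : HasDerivAt (fun s : ℝ => s+1) 1 t := (hasDerivAt_id t).add_const 1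
  have h2 : HasDerivAt (fun s : ℝ => 2*(s-1)/(s+1)) (4/(t+1)^2) t := by
    have := hnum.div hden hne
    refine this.congr_deriv ?_
    field_simp
    ring
  exact h1.sub h2

private lemma phi_mono : MonotoneOn (fun s : ℝ => Real.log s - 2*(s-1)/(s+1)) (Set.Ioi (0:ℝ)) := by
  apply monotoneOn_of_deriv_nonneg (convex_Ioi 0)
  · intro t ht
    exact ((phi_deriv ht).continuousAt).continuousWithinAt
  · intro t ht
    rw [interior_Ioi] at ht
    exact (phi_deriv ht).differentiableAt.differentiableWithinAt
  · intro t ht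
    rw [interior_Ioi] at ht
    rw [(phi_deriv ht).deriv]
    have h1 : (0:ℝ) < t := ht
    have h2 : (0:ℝ) < (t+1)^2 := by positivity
    rw [sub_nonneg, div_le_div_iff₀ h2 h1]
    nlinarith [sq_nonneg (t-1)]

private lemma two_ratio_le_log {t : ℝ} (ht : 1 ≤ t) : 2*(t-1)/(t+1) ≤ Real.log t := by
  have h := phi_mono (Set.mem_Ioi.mpr one_pos) (Set.mem_Ioi.mpr (lt_of_lt_of_le one_pos ht)) ht
  simp [Real.log_one] at h
  linarith

private lemma log_le_two_ratio {t : ℝ} (ht0 : 0 < t) (ht : t ≤ 1) :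
    Real.log t ≤ 2*(t-1)/(t+1) := by
  have h := phi_mono (Set.mem_Ioi.mpr ht0) (Set.mem_Ioi.mpr one_pos) ht
  simp [Real.log_one] at h
  linarith

private lemma g_deriv {t : ℝ} (ht : 0 < t) :
    HasDerivAt (fun s : ℝ => s * Real.log s - s + 1 - 3*(s-1)^2/(2*(s+2)))
      (Real.log t - 3*((t-1)*(t+5))/(2*(t+2)^2) ) t := by
  have h1 : HasDerivAt (fun s : ℝ => s * Real.log s) (Real.log t + 1) t := by
    have := (hasDerivAt_id t).mul (Real.hasDerivAt_log (ne_of_gt ht))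
    refine this.congr_deriv ?_
    field_simp
    simp only [id]
    ring
  have hne : 2*(t+2) ≠ 0 := by positivity
  have hnum : HasDerivAt (fun s : ℝ => 3*(s-1)^2) (6*(t-1)) t := by
    have := (((hasDerivAt_id t).sub_const (1:ℝ)).pow 2).const_mul (3:ℝ)
    refine this.congr_deriv ?_
    simp [id]
    ring
  have hden : HasDerivAt (fun s : ℝ => 2*(s+2)) 2 t := by
    simpa using ((hasDerivAt_id t).add_const (2:ℝ)).const_mul (2:ℝ)
  have h2 : HasDerivAt (fun s : ℝ => 3*(s-1)^2/(2*(s+2)))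
      (3*((t-1)*(t+5))/(2*(t+2)^2)) t := by
    have := hnum.div hden hne
    refine this.congr_deriv ?_
    have h2' : t + 2 ≠ 0 := by positivity
    field_simp
    ring
  have := ((h1.sub (hasDerivAt_id t)).add_const (1:ℝ)).sub h2
  refine this.congr_deriv ?_
  ring

private lemma g_nonneg {t : ℝ} (ht : 0 < t) :
    0 ≤ t * Real.log t - t + 1 - 3*(t-1)^2/(2*(t+2)) := by
  set g : ℝ → ℝ := fun s : ℝ => s * Real.log s - s + 1 - 3*(s-1)^2/(2*(s+2)) with hg
  have hg1 : g 1 = 0 := by simp [hg, Real.log_one]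
  rcases le_total 1 t with h | h
  · have mono : MonotoneOn g (Set.Ici (1:ℝ)) := by
      apply monotoneOn_of_deriv_nonneg (convex_Ici 1)
      · intro s hs
        have hs0 : (0:ℝ) < s := lt_of_lt_of_le one_pos hs
        exact ((g_deriv hs0).continuousAt).continuousWithinAt
      · intro s hs
        rw [interior_Ici] at hs
        have hs0 : (0:ℝ) < s := lt_trans one_pos hs
        exact (g_deriv hs0).differentiableAt.differentiableWithinAt
      · intro s hs
        rw [interior_Ici] at hs
        have hs1 : (1:ℝ) < s := hs
        have hs0 : (0:ℝ) < s := lt_trans one_pos hs1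
        rw [(g_deriv hs0).deriv, sub_nonneg]
        refine le_trans ?_ (two_ratio_le_log hs1.le)
        rw [div_le_div_iff₀ (by positivity) (by positivity)]
        nlinarith [mul_nonneg (sub_nonneg.mpr hs1.le) (sq_nonneg (s-1))]
    have := mono (Set.mem_Ici.mpr le_rfl) (Set.mem_Ici.mpr h) h
    rw [hg1] at this
    exact this
  · have anti : AntitoneOn g (Set.Ioc (0:ℝ) 1) := by
      apply antitoneOn_of_deriv_nonpos (convex_Ioc 0 1)
      · intro s hs
        exact ((g_deriv hs.1).continuousAt).continuousWithinAt
      · intro s hs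
        rw [interior_Ioc] at hs
        exact (g_deriv hs.1).differentiableAt.differentiableWithinAt
      · intro s hs
        rw [interior_Ioc] at hs
        obtain ⟨hs0, hs1⟩ := hs
        rw [(g_deriv hs0).deriv, sub_nonpos]
        refine le_trans (log_le_two_ratio hs0 hs1.le) ?_
        rw [div_le_div_iff₀ (by positivity) (by positivity)]
        nlinarith [mul_nonneg (sub_nonneg.mpr hs1.le) (sq_nonneg (s-1))]
    have := anti (Set.mem_Ioc.mpr ⟨ht, h⟩) (Set.mem_Ioc.mpr ⟨one_pos, le_rfl⟩) h
    rw [hg1] at this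
    exact this

private lemma kl_pointwise {x y : ℝ} (hx : 0 < x) (hy : 0 < y) :
    x - y + 3*(x-y)^2/(2*(x+2*y)) ≤ x * Real.log (x/y) := by
  have ht : 0 < x/y := div_pos hx hy
  have hg := g_nonneg ht
  have hxy : 0 < x + 2*y := by linarith
  have key : y * ((x/y) * Real.log (x/y) - (x/y) + 1 - 3*((x/y)-1)^2/(2*((x/y)+2)))
      = x * Real.log (x/y) - x + y - 3*(x-y)^2/(2*(x+2*y)) := by
    field_simp
  nlinarith [mul_nonneg hy.le hg]

private lemma log_sum_ineq {ι : Type*} [Fintype ι] (u v : ι → ℝ)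
    (hu : ∀ i, 0 ≤ u i) (hv : ∀ i, 0 ≤ v i) (huv : ∀ i, v i = 0 → u i = 0) :
    (∑ i, u i) * Real.log ((∑ i, u i) / (∑ i, v i)) ≤ ∑ i, u i * Real.log (u i / v i) := by
  rcases eq_or_lt_of_le (Finset.sum_nonneg fun i _ => hv i) with hV | hV
  · have hv0 : ∀ i ∈ Finset.univ, v i = 0 :=
      (Finset.sum_eq_zero_iff_of_nonneg (fun i _ => hv i)).mp hV.symm
    have hu0 : ∀ i, u i = 0 := fun i => huv i (hv0 i (Finset.mem_univ i))
    simp [hu0]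
  set U := ∑ i, u i with hU
  set V := ∑ i, v i with hVdef
  rcases eq_or_lt_of_le (Finset.sum_nonneg fun i _ => hu i) with hU0 | hU0
  · have hu0 : ∀ i ∈ Finset.univ, u i = 0 :=
      (Finset.sum_eq_zero_iff_of_nonneg (fun i _ => hu i)).mp hU0.symm
    have hUz : U = 0 := hU.trans hU0.symm
    have hRz : (∑ i, u i * Real.log (u i / v i)) = 0 :=
      Finset.sum_eq_zero (fun i hi => by rw [hu0 i hi, zero_mul])
    rw [hUz, hRz, zero_mul]
  have point : ∀ i, u i * Real.log (U/V) + u i - v i * (U/V) ≤ u i * Real.log (u i / v i) := by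
    intro i
    rcases eq_or_lt_of_le (hu i) with h0 | h0
    · rw [← h0]
      have : (0:ℝ) ≤ v i * (U/V) := mul_nonneg (hv i) (le_of_lt (div_pos hU0 hV))
      simp only [zero_mul, zero_add]
      linarith
    · have hvi : 0 < v i := by
        rcases eq_or_lt_of_le (hv i) with h | h
        · exact absurd (huv i h.symm) (ne_of_gt h0)
        · exact h
      have harg : 0 < u i * V / (v i * U) := by positivity
      have hb : 1 - (u i * V / (v i * U))⁻¹ ≤ Real.log (u i * V / (v i * U)) :=
        Real.one_sub_inv_le_log_of_pos harg
      have hinv : (u i * V / (v i * U))⁻¹ = v i * U / (u i * V) := by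
        rw [inv_div]
      have hlog : Real.log (u i / v i) = Real.log (U/V) + Real.log (u i * V / (v i * U)) := by
        rw [← Real.log_mul (by positivity) (by positivity)]
        congr 1
        field_simp
        exact (div_self (ne_of_gt hU0)).symm
      have hmul : u i * (1 - v i * U / (u i * V)) = u i - v i * (U / V) := by
        field_simp
      have := mul_le_mul_of_nonneg_left hb (le_of_lt h0)
      rw [hinv] at hb
      calc u i * Real.log (U/V) + u i - v i * (U/V)
          = u i * Real.log (U/V) + u i * (1 - v i * U / (u i * V)) := by rw [hmul]; ring
        _ ≤ u i * Real.log (U/V) + u i * Real.log (u i * V / (v i * U)) := by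
            have := mul_le_mul_of_nonneg_left hb (le_of_lt h0)
            linarith
        _ = u i * Real.log (u i / v i) := by rw [hlog]; ring
  have hsum : ∑ i, (u i * Real.log (U/V) + u i - v i * (U/V))
      = U * Real.log (U/V) := by
    rw [Finset.sum_sub_distrib, Finset.sum_add_distrib, ← Finset.sum_mul, ← Finset.sum_mul,
      ← hU, ← hVdef]
    have : V * (U/V) = U := by field_simp
    rw [this]
    ring
  calc U * Real.log (U/V)
      = ∑ i, (u i * Real.log (U/V) + u i - v i * (U/V)) := hsum.symm
    _ ≤ ∑ i, u i * Real.log (u i / v i) := Finset.sum_le_sum (fun i _ => point i)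

private lemma pinsker_fin {ι : Type*} [Fintype ι] (p q : ι → ℝ)
    (hp : ∀ i, 0 < p i) (hq : ∀ i, 0 < q i)
    (hps : ∑ i, p i = 1) (hqs : ∑ i, q i = 1) :
    2 * ((1/2) * ∑ i, |p i - q i|)^2 ≤ ∑ i, p i * Real.log (p i / q i) := by
  have hgpos : ∀ i ∈ Finset.univ, (0:ℝ) < p i + 2 * q i := fun i _ => by
    have := hp i; have := hq i; linarith
  have CS : (∑ i, |p i - q i|)^2 / (∑ i, (p i + 2 * q i))
      ≤ ∑ i, |p i - q i|^2 / (p i + 2 * q i) :=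
    Finset.sq_sum_div_le_sum_sq_div Finset.univ (fun i => |p i - q i|) hgpos
  have hsum3 : (∑ i, (p i + 2 * q i)) = 3 := by
    rw [Finset.sum_add_distrib, ← Finset.mul_sum, hps, hqs]; norm_num
  rw [hsum3] at CS
  have habs : ∀ i, |p i - q i|^2 = (p i - q i)^2 := fun i => sq_abs _
  have CS' : (∑ i, |p i - q i|)^2 / 3 ≤ ∑ i, (p i - q i)^2 / (p i + 2 * q i) := by
    calc (∑ i, |p i - q i|)^2 / 3 ≤ ∑ i, |p i - q i|^2 / (p i + 2 * q i) := CS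
      _ = ∑ i, (p i - q i)^2 / (p i + 2 * q i) := by
          exact Finset.sum_congr rfl (fun i _ => by rw [habs i])
  have key : ∑ i, (p i - q i + 3*(p i - q i)^2/(2*(p i + 2*q i)))
      ≤ ∑ i, p i * Real.log (p i / q i) :=
    Finset.sum_le_sum (fun i _ => kl_pointwise (hp i) (hq i))
  have hsplit : ∑ i, (p i - q i + 3*(p i - q i)^2/(2*(p i + 2*q i)))
      = (3/2) * ∑ i, (p i - q i)^2 / (p i + 2 * q i) := by
    rw [Finset.sum_add_distrib, Finset.sum_sub_distrib, hps, hqs, Finset.mul_sum]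
    rw [sub_self, zero_add]
    exact Finset.sum_congr rfl (fun i _ => by
      have := hgpos i (Finset.mem_univ i)
      field_simp)
  rw [hsplit] at key
  have h1 : 2 * ((1/2) * ∑ i, |p i - q i|)^2 = (∑ i, |p i - q i|)^2 / 2 := by ring
  rw [h1]
  calc (∑ i, |p i - q i|)^2 / 2 = (3/2) * ((∑ i, |p i - q i|)^2 / 3) := by ring
    _ ≤ (3/2) * ∑ i, (p i - q i)^2 / (p i + 2 * q i) := by linarith [CS']
    _ ≤ ∑ i, p i * Real.log (p i / q i) := key


/-- Combined Pinsker + CMI bound: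
`2 TV(P, P̂)² ≤ D_KL(P ‖ P̂) ≤ I(X_A : X_C | X_B)_P`. -/
theorem tv_le_cmi {XA XB XC : Type*}
    [Fintype XA] [Fintype XB] [Fintype XC]
    (P : XA → XB → XC → ℝ)
    (hPpos : ∀ a b c, 0 < P a b c) (hPsum : ∑ a, ∑ b, ∑ c, P a b c = 1)
    (NA : XA → XA → ℝ) (hNnn : ∀ y x, 0 ≤ NA y x) (hNrow : ∀ x, ∑ y, NA y x = 1)
    (PAB : XA → XB → ℝ) (hPAB : ∀ a b, PAB a b = ∑ c, P a b c)
    (PBC : XB → XC → ℝ) (hPBC : ∀ b c, PBC b c = ∑ a, P a b c)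
    (PB : XB → ℝ) (hPB : ∀ b, PB b = ∑ a, ∑ c, P a b c)
    (NP : XA → XB → XC → ℝ)
    (hNP : ∀ y b c, NP y b c = ∑ a, NA y a * P a b c)
    (Phat : XA → XB → XC → ℝ)
    (hPhat : ∀ a b c, Phat a b c =
      ∑ y, (NA y a * PAB a b / ∑ a', NA y a' * PAB a' b) * NP y b c)
    (H3 HAB HBC HB : ℝ)
    (hH3 : H3 = -∑ a, ∑ b, ∑ c, P a b c * Real.log (P a b c))
    (hHAB : HAB = -∑ a, ∑ b, PAB a b * Real.log (PAB a b))
    (hHBC : HBC = -∑ b, ∑ c, PBC b c * Real.log (PBC b c))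
    (hHB : HB = -∑ b, PB b * Real.log (PB b))
    -- total variation distance between `P` and `P̂`
    (TV : ℝ) (hTV : TV = (1/2) * ∑ a, ∑ b, ∑ c, |P a b c - Phat a b c|) :
    2 * TV ^ 2 ≤ (∑ a, ∑ b, ∑ c, P a b c * Real.log (P a b c / Phat a b c))
    ∧ (∑ a, ∑ b, ∑ c, P a b c * Real.log (P a b c / Phat a b c))
        ≤ HAB + HBC - H3 - HB := by
  -- nonemptiness
  haveI hXA : Nonempty XA := by
    by_contra h
    rw [not_nonempty_iff] at h
    haveI := h
    simp at hPsum
  haveI hXB : Nonempty XB := by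
    by_contra h
    rw [not_nonempty_iff] at h
    haveI := h
    simp at hPsum
  haveI hXC : Nonempty XC := by
    by_contra h
    rw [not_nonempty_iff] at h
    haveI := h
    simp at hPsum
  -- basic positivity
  have hPABpos : ∀ a b, 0 < PAB a b := fun a b => by
    rw [hPAB]; exact Finset.sum_pos (fun c _ => hPpos a b c) Finset.univ_nonempty
  have hPBCpos : ∀ b c, 0 < PBC b c := fun b c => by
    rw [hPBC]; exact Finset.sum_pos (fun a _ => hPpos a b c) Finset.univ_nonempty
  have hPBpos : ∀ b, 0 < PB b := fun b => by
    rw [hPB]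
    exact Finset.sum_pos
      (fun a _ => Finset.sum_pos (fun c _ => hPpos a b c) Finset.univ_nonempty)
      Finset.univ_nonempty
  obtain ⟨NPAB, hNPAB⟩ : ∃ f : XA → XB → ℝ, ∀ y b, f y b = ∑ a', NA y a' * PAB a' b :=
    ⟨_, fun _ _ => rfl⟩
  have hPhat' : ∀ a b c, Phat a b c = ∑ y, NA y a * PAB a b / NPAB y b * NP y b c := by
    intro a b c
    rw [hPhat]
    exact Finset.sum_congr rfl fun y _ => by rw [hNPAB]
  have hNPnn : ∀ y b c, 0 ≤ NP y b c := fun y b c => by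
    rw [hNP]; exact Finset.sum_nonneg fun a _ => mul_nonneg (hNnn y a) (hPpos a b c).le
  have hNPABnn : ∀ y b, 0 ≤ NPAB y b := fun y b => by
    rw [hNPAB]; exact Finset.sum_nonneg fun a _ => mul_nonneg (hNnn y a) (hPABpos a b).le
  have hNA_pos_NPAB : ∀ y a b, 0 < NA y a → 0 < NPAB y b := fun y a b h => by
    rw [hNPAB]
    exact Finset.sum_pos' (fun a' _ => mul_nonneg (hNnn y a') (hPABpos a' b).le)
      ⟨a, Finset.mem_univ a, mul_pos h (hPABpos a b)⟩
  have hNA_pos_NP : ∀ y a b c, 0 < NA y a → 0 < NP y b c := fun y a b c h => by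
    rw [hNP]
    exact Finset.sum_pos' (fun a' _ => mul_nonneg (hNnn y a') (hPpos a' b c).le)
      ⟨a, Finset.mem_univ a, mul_pos h (hPpos a b c)⟩
  have hNPAB0 : ∀ y b, NPAB y b = 0 → ∀ a, NA y a = 0 := by
    intro y b h a
    rw [hNPAB] at h
    have h2 := (Finset.sum_eq_zero_iff_of_nonneg
      (fun a' _ => mul_nonneg (hNnn y a') (hPABpos a' b).le)).mp h a (Finset.mem_univ a)
    rcases mul_eq_zero.mp h2 with h' | h'
    · exact h'
    · exact absurd h' (ne_of_gt (hPABpos a b))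
  have hNP0 : ∀ y b c, NPAB y b = 0 → NP y b c = 0 := fun y b c h => by
    rw [hNP]; exact Finset.sum_eq_zero fun a _ => by rw [hNPAB0 y b h a, zero_mul]
  have hexistsNA : ∀ a, ∃ y, 0 < NA y a := by
    intro a
    by_contra h
    push_neg at h
    have h0 := hNrow a
    rw [Finset.sum_eq_zero (fun y _ => le_antisymm (h y) (hNnn y a))] at h0
    exact zero_ne_one h0
  have hPhatpos : ∀ a b c, 0 < Phat a b c := by
    intro a b c
    obtain ⟨y, hy⟩ := hexistsNA a
    rw [hPhat']
    apply Finset.sum_pos'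
    · intro y' _
      exact mul_nonneg (div_nonneg (mul_nonneg (hNnn y' a) (hPABpos a b).le)
        (hNPABnn y' b)) (hNPnn y' b c)
    · exact ⟨y, Finset.mem_univ y,
        mul_pos (div_pos (mul_pos hy (hPABpos a b)) (hNA_pos_NPAB y a b hy))
          (hNA_pos_NP y a b c hy)⟩
  -- marginal of Phat over a equals that of P
  have hNPmarg : ∀ b c, ∑ y, NP y b c = ∑ a, P a b c := by
    intro b c
    simp_rw [hNP]
    rw [Finset.sum_comm]
    exact Finset.sum_congr rfl fun a _ => by rw [← Finset.sum_mul, hNrow a, one_mul]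
  have hPhat_margA : ∀ b c, ∑ a, Phat a b c = ∑ a, P a b c := by
    intro b c
    have h1 : ∑ a, Phat a b c = ∑ y, (∑ a, NA y a * PAB a b) / NPAB y b * NP y b c := by
      simp_rw [hPhat']
      rw [Finset.sum_comm]
      exact Finset.sum_congr rfl fun y _ => by rw [← Finset.sum_mul, ← Finset.sum_div]
    have h2 : ∀ y, (∑ a, NA y a * PAB a b) / NPAB y b * NP y b c = NP y b c := by
      intro y
      rw [← hNPAB]
      by_cases h : NPAB y b = 0
      · rw [hNP0 y b c h, mul_zero]
      · rw [div_self h, one_mul]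
    rw [h1, Finset.sum_congr rfl fun y _ => h2 y]
    exact hNPmarg b c
  have hPhatsum : ∑ a, ∑ b, ∑ c, Phat a b c = 1 := by
    rw [← hPsum, Finset.sum_comm]
    have inner : ∀ b, ∑ a, ∑ c, Phat a b c = ∑ a, ∑ c, P a b c := by
      intro b
      rw [Finset.sum_comm, Finset.sum_congr rfl fun c _ => hPhat_margA b c, Finset.sum_comm]
    rw [Finset.sum_congr rfl fun b _ => inner b, Finset.sum_comm]
  -- flattening helper
  have flat : ∀ f : XA → XB → XC → ℝ,
      (∑ x : XA × XB × XC, f x.1 x.2.1 x.2.2) = ∑ a, ∑ b, ∑ c, f a b c := by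
    intro f
    rw [Fintype.sum_prod_type]
    exact Finset.sum_congr rfl fun a _ =>
      Fintype.sum_prod_type (f := fun z : XB × XC => f a z.1 z.2)
  constructor
  · -- Pinsker part
    have hp : 2 * ((1/2) * ∑ x : XA × XB × XC,
          |P x.1 x.2.1 x.2.2 - Phat x.1 x.2.1 x.2.2|)^2
        ≤ ∑ x : XA × XB × XC,
          P x.1 x.2.1 x.2.2 * Real.log (P x.1 x.2.1 x.2.2 / Phat x.1 x.2.1 x.2.2) :=
      pinsker_fin (fun x : XA × XB × XC => P x.1 x.2.1 x.2.2)
        (fun x => Phat x.1 x.2.1 x.2.2) (fun x => hPpos _ _ _) (fun x => hPhatpos _ _ _)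
        (by rw [flat P]; exact hPsum)
        (by rw [flat Phat]; exact hPhatsum)
    have eabs : (∑ x : XA × XB × XC, |P x.1 x.2.1 x.2.2 - Phat x.1 x.2.1 x.2.2|)
        = ∑ a, ∑ b, ∑ c, |P a b c - Phat a b c| :=
      flat (fun a b c => |P a b c - Phat a b c|)
    have ekl : (∑ x : XA × XB × XC,
          P x.1 x.2.1 x.2.2 * Real.log (P x.1 x.2.1 x.2.2 / Phat x.1 x.2.1 x.2.2))
        = ∑ a, ∑ b, ∑ c, P a b c * Real.log (P a b c / Phat a b c) :=
      flat (fun a b c => P a b c * Real.log (P a b c / Phat a b c))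
    rw [eabs, ekl] at hp
    rw [hTV]
    exact hp
  · -- CMI part
    have stepA : ∀ a b c, P a b c * Real.log (P a b c / Phat a b c)
        ≤ ∑ y, NA y a * P a b c *
            Real.log (P a b c * NPAB y b / (PAB a b * NP y b c)) := by
      intro a b c
      have hvz : ∀ y, NA y a * PAB a b / NPAB y b * NP y b c = 0 → NA y a * P a b c = 0 := by
        intro y hv
        by_cases hna : NA y a = 0
        · rw [hna, zero_mul]
        · have hpos : 0 < NA y a := lt_of_le_of_ne (hNnn y a) (Ne.symm hna)
          have : 0 < NA y a * PAB a b / NPAB y b * NP y b c :=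
            mul_pos (div_pos (mul_pos hpos (hPABpos a b)) (hNA_pos_NPAB y a b hpos))
              (hNA_pos_NP y a b c hpos)
          exact absurd hv (ne_of_gt this)
      have hls : (∑ y, NA y a * P a b c) *
            Real.log ((∑ y, NA y a * P a b c) / (∑ y, NA y a * PAB a b / NPAB y b * NP y b c))
          ≤ ∑ y, NA y a * P a b c *
              Real.log (NA y a * P a b c / (NA y a * PAB a b / NPAB y b * NP y b c)) :=
        log_sum_ineq (fun y => NA y a * P a b c)
          (fun y => NA y a * PAB a b / NPAB y b * NP y b c)
          (fun y => mul_nonneg (hNnn y a) (hPpos a b c).le)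
          (fun y => mul_nonneg (div_nonneg (mul_nonneg (hNnn y a) (hPABpos a b).le)
            (hNPABnn y b)) (hNPnn y b c))
          hvz
      have hu_sum : ∑ y, NA y a * P a b c = P a b c := by
        rw [← Finset.sum_mul, hNrow a, one_mul]
      rw [hu_sum, ← hPhat' a b c] at hls
      have hterm : ∀ y, NA y a * P a b c *
            Real.log (NA y a * P a b c / (NA y a * PAB a b / NPAB y b * NP y b c))
          = NA y a * P a b c * Real.log (P a b c * NPAB y b / (PAB a b * NP y b c)) := by
        intro y
        by_cases hna : NA y a = 0
        · rw [hna]; ring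
        · have hpos : 0 < NA y a := lt_of_le_of_ne (hNnn y a) (Ne.symm hna)
          have h1 := hNA_pos_NPAB y a b hpos
          have h2 := hNA_pos_NP y a b c hpos
          have h3 := hPABpos a b
          congr 2
          field_simp
      rw [Finset.sum_congr rfl fun y _ => hterm y] at hls
      exact hls
    have stepB : (∑ a, ∑ b, ∑ c, P a b c * Real.log (P a b c / Phat a b c))
        ≤ ∑ a, ∑ b, ∑ c, ∑ y, NA y a * P a b c *
            Real.log (P a b c * NPAB y b / (PAB a b * NP y b c)) :=
      Finset.sum_le_sum fun a _ => Finset.sum_le_sum fun b _ =>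
        Finset.sum_le_sum fun c _ => stepA a b c
    -- split the log
    have hsplit : ∀ a b c y, NA y a * P a b c *
          Real.log (P a b c * NPAB y b / (PAB a b * NP y b c))
        = NA y a * (P a b c * Real.log (P a b c / PAB a b))
          + NA y a * P a b c * Real.log (NPAB y b / NP y b c) := by
      intro a b c y
      by_cases hna : NA y a = 0
      · rw [hna]; ring
      · have hpos : 0 < NA y a := lt_of_le_of_ne (hNnn y a) (Ne.symm hna)
        have h1 := hNA_pos_NPAB y a b hpos
        have h2 := hNA_pos_NP y a b c hpos
        have harg : P a b c * NPAB y b / (PAB a b * NP y b c)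
            = (P a b c / PAB a b) * (NPAB y b / NP y b c) := div_mul_div_comm _ _ _ _ |>.symm
        rw [harg, Real.log_mul (ne_of_gt (div_pos (hPpos a b c) (hPABpos a b)))
          (ne_of_gt (div_pos h1 h2))]
        ring
    have e1 : ∀ a b c, (∑ y, NA y a * P a b c *
          Real.log (P a b c * NPAB y b / (PAB a b * NP y b c)))
        = P a b c * Real.log (P a b c / PAB a b)
          + ∑ y, NA y a * P a b c * Real.log (NPAB y b / NP y b c) := by
      intro a b c
      rw [Finset.sum_congr rfl fun y _ => hsplit a b c y, Finset.sum_add_distrib,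
        ← Finset.sum_mul, hNrow a, one_mul]
    have hq : (∑ a, ∑ b, ∑ c, ∑ y, NA y a * P a b c *
          Real.log (P a b c * NPAB y b / (PAB a b * NP y b c)))
        = (∑ a, ∑ b, ∑ c, P a b c * Real.log (P a b c / PAB a b))
          + ∑ b, ∑ c, ∑ y, NP y b c * Real.log (NPAB y b / NP y b c) := by
      rw [Finset.sum_congr rfl fun a _ => Finset.sum_congr rfl fun b _ =>
        Finset.sum_congr rfl fun c _ => e1 a b c]
      simp_rw [Finset.sum_add_distrib]
      congr 1
      have e3 : (∑ a, ∑ b, ∑ c, ∑ y, NA y a * P a b c * Real.log (NPAB y b / NP y b c))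
          = ∑ b, ∑ c, ∑ y, ∑ a, NA y a * P a b c * Real.log (NPAB y b / NP y b c) := by
        rw [Finset.sum_comm]
        exact Finset.sum_congr rfl fun b _ => by
          rw [Finset.sum_comm]
          exact Finset.sum_congr rfl fun c _ => Finset.sum_comm
      rw [e3]
      exact Finset.sum_congr rfl fun b _ => Finset.sum_congr rfl fun c _ =>
        Finset.sum_congr rfl fun y _ => by rw [← Finset.sum_mul, ← hNP]
    have stepD : (∑ b, ∑ c, ∑ y, NP y b c * Real.log (NPAB y b / NP y b c))
        ≤ ∑ b, ∑ c, PBC b c * Real.log (PB b / PBC b c) := by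
      refine Finset.sum_le_sum fun b _ => Finset.sum_le_sum fun c _ => ?_
      have hls : (∑ y, NP y b c) * Real.log ((∑ y, NP y b c) / (∑ y, NPAB y b))
          ≤ ∑ y, NP y b c * Real.log (NP y b c / NPAB y b) :=
        log_sum_ineq (fun y => NP y b c) (fun y => NPAB y b)
          (fun y => hNPnn y b c) (fun y => hNPABnn y b) (fun y h => hNP0 y b c h)
      have hNPsum : ∑ y, NP y b c = PBC b c := by rw [hNPmarg b c, hPBC]
      have hNPABsum : ∑ y, NPAB y b = PB b := by
        simp_rw [hNPAB]
        rw [Finset.sum_comm, hPB]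
        exact Finset.sum_congr rfl fun a _ => by
          rw [← Finset.sum_mul, hNrow a, one_mul, hPAB]
      rw [hNPsum, hNPABsum] at hls
      have flip : ∀ y, NP y b c * Real.log (NPAB y b / NP y b c)
          = -(NP y b c * Real.log (NP y b c / NPAB y b)) := by
        intro y
        rw [show NPAB y b / NP y b c = (NP y b c / NPAB y b)⁻¹ from (inv_div _ _).symm,
          Real.log_inv]
        ring
      calc (∑ y, NP y b c * Real.log (NPAB y b / NP y b c))
          = -∑ y, NP y b c * Real.log (NP y b c / NPAB y b) := by
            rw [Finset.sum_congr rfl fun y _ => flip y, Finset.sum_neg_distrib]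
        _ ≤ -(PBC b c * Real.log (PBC b c / PB b)) := neg_le_neg hls
        _ = PBC b c * Real.log (PB b / PBC b c) := by
            rw [show PB b / PBC b c = (PBC b c / PB b)⁻¹ from (inv_div _ _).symm,
              Real.log_inv]
            ring
    have hE1 : (∑ a, ∑ b, ∑ c, P a b c * Real.log (P a b c / PAB a b)) = HAB - H3 := by
      have hpt : ∀ a b c, P a b c * Real.log (P a b c / PAB a b)
          = P a b c * Real.log (P a b c) - P a b c * Real.log (PAB a b) := by
        intro a b c
        rw [Real.log_div (ne_of_gt (hPpos a b c)) (ne_of_gt (hPABpos a b))]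
        ring
      simp_rw [hpt, Finset.sum_sub_distrib]
      have e : (∑ a, ∑ b, ∑ c, P a b c * Real.log (PAB a b))
          = ∑ a, ∑ b, PAB a b * Real.log (PAB a b) :=
        Finset.sum_congr rfl fun a _ => Finset.sum_congr rfl fun b _ => by
          rw [← Finset.sum_mul, ← hPAB]
      rw [e, hH3, hHAB]
      ring
    have hE2 : (∑ b, ∑ c, PBC b c * Real.log (PB b / PBC b c)) = HBC - HB := by
      have hpt : ∀ b c, PBC b c * Real.log (PB b / PBC b c)
          = PBC b c * Real.log (PB b) - PBC b c * Real.log (PBC b c) := by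
        intro b c
        rw [Real.log_div (ne_of_gt (hPBpos b)) (ne_of_gt (hPBCpos b c))]
        ring
      simp_rw [hpt, Finset.sum_sub_distrib]
      have hPBmarg : ∀ b, ∑ c, PBC b c = PB b := by
        intro b
        simp_rw [hPBC]
        rw [Finset.sum_comm, ← hPB]
      have e : (∑ b, ∑ c, PBC b c * Real.log (PB b)) = ∑ b, PB b * Real.log (PB b) :=
        Finset.sum_congr rfl fun b _ => by rw [← Finset.sum_mul, hPBmarg b]
      rw [e, hHBC, hHB]
      ring
    calc (∑ a, ∑ b, ∑ c, P a b c * Real.log (P a b c / Phat a b c))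
        ≤ ∑ a, ∑ b, ∑ c, ∑ y, NA y a * P a b c *
            Real.log (P a b c * NPAB y b / (PAB a b * NP y b c)) := stepB
      _ = (∑ a, ∑ b, ∑ c, P a b c * Real.log (P a b c / PAB a b))
          + ∑ b, ∑ c, ∑ y, NP y b c * Real.log (NPAB y b / NP y b c) := hq
      _ ≤ (∑ a, ∑ b, ∑ c, P a b c * Real.log (P a b c / PAB a b))
          + ∑ b, ∑ c, PBC b c * Real.log (PB b / PBC b c) := add_le_add_right stepD _
      _ = (HAB - H3) + (HBC - HB) := by rw [hE1, hE2]
      _ = HAB + HBC - H3 - HB := by ring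
end

section
/- (Donsker–Varadhan lower bound.) For probability distributions P, Q on a finite set X with supp(P) ⊆ supp(Q), and any function T : X → ℝ, one has D_KL(P ‖ Q) ≥ E_P[T] − log(E_Q[e^T]), where E_P[T] = ∑_x P(x)T(x) and E_Q[e^T] = ∑_x Q(x)e^{T(x)}. -/
open Finset

/-- Donsker–Varadhan lower bound:
`D_KL(P ‖ Q) ≥ E_P[T] − log(E_Q[e^T])`. -/
theorem donsker_varadhan_lower {X : Type*} [Fintype X]
    (P Q : X → ℝ)
    (hPnn : ∀ x, 0 ≤ P x) (hPsum : ∑ x, P x = 1)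
    (hQnn : ∀ x, 0 ≤ Q x) (hQsum : ∑ x, Q x = 1)
    (hsupp : ∀ x, 0 < P x → 0 < Q x)
    (T : X → ℝ) :
    (∑ x, P x * T x) - Real.log (∑ x, Q x * Real.exp (T x))
      ≤ ∑ x, P x * Real.log (P x / Q x) := by
  set Z := ∑ x, Q x * Real.exp (T x) with hZdef
  have hZ : 0 < Z := by
    obtain ⟨x, hx⟩ : ∃ x, Q x ≠ 0 := by
      by_contra h
      push_neg at h
      simp [h] at hQsum
    exact Finset.sum_pos' (fun x _ => mul_nonneg (hQnn x) (Real.exp_pos _).le)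
      ⟨x, Finset.mem_univ x, mul_pos ((hQnn x).lt_of_ne (Ne.symm hx)) (Real.exp_pos _)⟩
  have key : ∀ x, P x * T x - P x * Real.log (P x / Q x) - P x * Real.log Z
      ≤ Q x * Real.exp (T x) / Z - P x := by
    intro x
    rcases eq_or_lt_of_le (hPnn x) with hP | hP
    · rw [← hP]
      simp only [zero_mul, sub_zero, zero_sub, neg_zero]
      exact div_nonneg (mul_nonneg (hQnn x) (Real.exp_pos _).le) hZ.le
    · have hQ := hsupp x hP
      have h1 : Real.log (Q x * Real.exp (T x) / (P x * Z))
          ≤ Q x * Real.exp (T x) / (P x * Z) - 1 :=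
        Real.log_le_sub_one_of_pos (div_pos (mul_pos hQ (Real.exp_pos _)) (mul_pos hP hZ))
      have h2 : Real.log (Q x * Real.exp (T x) / (P x * Z))
          = T x - Real.log (P x / Q x) - Real.log Z := by
        rw [Real.log_div (by positivity) (by positivity),
          Real.log_mul (ne_of_gt hQ) (Real.exp_ne_zero _),
          Real.log_mul (ne_of_gt hP) (ne_of_gt hZ), Real.log_exp,
          Real.log_div (ne_of_gt hP) (ne_of_gt hQ)]
        ring
      rw [h2] at h1
      have h3 := mul_le_mul_of_nonneg_left h1 (hPnn x)
      have h4 : P x * (Q x * Real.exp (T x) / (P x * Z) - 1)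
          = Q x * Real.exp (T x) / Z - P x := by
        field_simp
      rw [h4] at h3
      nlinarith [h3]
  have hsum : ∑ x, (P x * T x - P x * Real.log (P x / Q x) - P x * Real.log Z)
      ≤ ∑ x, (Q x * Real.exp (T x) / Z - P x) :=
    Finset.sum_le_sum (fun x _ => key x)
  have hrhs : ∑ x, (Q x * Real.exp (T x) / Z - P x) = 0 := by
    rw [Finset.sum_sub_distrib, ← Finset.sum_div, ← hZdef, div_self (ne_of_gt hZ), hPsum]
    ring
  have hlhs : ∑ x, (P x * T x - P x * Real.log (P x / Q x) - P x * Real.log Z)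
      = (∑ x, P x * T x) - (∑ x, P x * Real.log (P x / Q x)) - Real.log Z := by
    rw [Finset.sum_sub_distrib, Finset.sum_sub_distrib, ← Finset.sum_mul, hPsum, one_mul]
  rw [hlhs, hrhs] at hsum
  linarith
end
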